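/- Let a > 0 and 0 < λ < a²/(2(a+1)). Let d = 1 − 27λa(a+1)/(2(a + λ(a+1)/a)³). Then t* = (a − λ(a+1)/(2a))/(a + λ(a+1)/a) lies in (1/2, 1) and satisfies 4(t*)³ − 3t* = d. -/

import Mathlib

/-- For `a > 0` and `0 < λ < a²/(2(a+1))`, with
`d = 1 − 27λa(a+1)/(2(a + λ(a+1)/a)³)`, the number
`t* = (a − λ(a+1)/(2a))/(a + λ(a+1)/a)` lies in `(1/2, 1)` and satisfies
`4(t*)³ − 3t* = d`. -/
theorem tstar_in_interval_and_root (a lam : ℝ) (ha : 0 < a) (hlam : 0 < lam)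
    (hsub : lam < a ^ 2 / (2 * (a + 1))) :
    let d := 1 - 27 * lam * a * (a + 1) / (2 * (a + lam * (a + 1) / a) ^ 3)
    let t := (a - lam * (a + 1) / (2 * a)) / (a + lam * (a + 1) / a)
    t ∈ Set.Ioo (1 / 2 : ℝ) 1 ∧ 4 * t ^ 3 - 3 * t = d := by
  intro d t
  have ha1 : (0:ℝ) < a + 1 := by linarith
  have hm : 0 < lam * (a + 1) := by positivity
  have h2m : 2 * (lam * (a + 1)) < a ^ 2 := by
    have h := (lt_div_iff₀ (by positivity : (0:ℝ) < 2 * (a + 1))).mp hsub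
    nlinarith [h]
  have hD : 0 < a + lam * (a + 1) / a := by positivity
  have hteq : t = (2 * a ^ 2 - lam * (a + 1)) / (2 * (a ^ 2 + lam * (a + 1))) := by
    show (a - lam * (a + 1) / (2 * a)) / (a + lam * (a + 1) / a) = _
    field_simp
  have hden : (0:ℝ) < 2 * (a ^ 2 + lam * (a + 1)) := by positivity
  constructor
  · constructor
    · rw [hteq, lt_div_iff₀ hden]; nlinarith
    · rw [hteq, div_lt_one hden]; nlinarith
  · show 4 * t ^ 3 - 3 * t = 1 - 27 * lam * a * (a + 1) / (2 * (a + lam * (a + 1) / a) ^ 3)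
    rw [hteq]
    have h1 : a ^ 2 + lam * (a + 1) ≠ 0 := by positivity
    have h2 : a + lam * (a + 1) / a ≠ 0 := ne_of_gt hD
    field_simp
    ring
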